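/- In the tautology-reduction profile, for every completion T, the score of the special candidate x₀ is s(T,x₀) = ℓ·ρ + (m−1)·r(m), where ρ = (Σ_{i=1}^{m} r(i)) − r(d) − r(d+1). -/

import Mathlib

/-- The candidate set `C = {x₀} ∪ {x_i, ¬x_i : 1 ≤ i ≤ ℓ}`:
`none` is the special candidate `x₀`, and `some (i, true)` / `some (i, false)`
are the literals `x_i` / `¬x_i`.  Thus `|C| = m = 2ℓ+1`. -/
abbrev Cand (ℓ : ℕ) := Option (Fin ℓ × Bool)

/-- The 0-based index of candidate `c` in the fixed enumeration `oth i` of the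
`m − 2` candidates other than `x_i, ¬x_i` (the list `c₁,…,c_{m−2}`). -/
noncomputable def othIdx {ℓ : ℕ} (oth : Fin ℓ → Fin (2 * ℓ - 1) → Cand ℓ)
    (i : Fin ℓ) (c : Cand ℓ) : ℕ :=
  if h : ∃ q, oth i q = c then (h.choose : ℕ) else 0

/-- The (1-based) position of candidate `c` in the base linear order
`c^i = (c₁,…,c_{d−1}, x_i, ¬x_i, c_d,…,c_{m−2})`. -/
noncomputable def viBasePos {ℓ : ℕ} (oth : Fin ℓ → Fin (2 * ℓ - 1) → Cand ℓ)
    (d : ℕ) (i : Fin ℓ) (c : Cand ℓ) : ℕ :=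
  if c = some (i, true) then d
  else if c = some (i, false) then d + 1
  else if othIdx oth i c + 1 < d then othIdx oth i c + 1 else othIdx oth i c + 3

/-- The (1-based) position of candidate `c` in the linear order of voter `v_i^j`
(for `j ∈ {1,…,m−3}`): the candidates `c₁,…,c_{m−2}` are shifted cyclically `j`
positions to the left, `x_i` is at position `d` and `¬x_i` at `d+1` when `j` is odd,
and they are swapped when `j` is even. -/
noncomputable def vijPos {ℓ : ℕ} (oth : Fin ℓ → Fin (2 * ℓ - 1) → Cand ℓ)
    (d : ℕ) (i : Fin ℓ) (j : ℕ) (c : Cand ℓ) : ℕ :=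
  if c = some (i, true) then (if j % 2 = 1 then d else d + 1)
  else if c = some (i, false) then (if j % 2 = 1 then d + 1 else d)
  else
    let p := (othIdx oth i c + (2 * ℓ - 1) - j) % (2 * ℓ - 1) + 1
    if p < d then p else p + 2

/-- The (1-based) position of candidate `c` in the linear order of voter `u_j`
(for `j ∈ {1,…,m−1}`): the literals `(c″₁,…,c″_{m−1}) = (x₁,¬x₁,…,x_ℓ,¬x_ℓ)`
shifted cyclically `j` positions to the left, followed by `x₀` at position `m`. -/
def uPos (ℓ : ℕ) (j : ℕ) (c : Cand ℓ) : ℕ :=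
  match c with
  | none => 2 * ℓ + 1
  | some (i, b) => ((2 * (i : ℕ) + (if b then 0 else 1)) + 2 * ℓ - j) % (2 * ℓ) + 1

/-- `pos` is (the position function of) a linear order on the `m = 2ℓ+1` candidates:
it is injective with values in `{1,…,m}`. -/
def IsPosOrder (ℓ : ℕ) (pos : Cand ℓ → ℕ) : Prop :=
  Function.Injective pos ∧ ∀ c, 1 ≤ pos c ∧ pos c ≤ 2 * ℓ + 1

/-- `Tv` is a completion of the tautology-reduction profile: `Tv i` is a linear order
extending the partial order of voter `v_i`, i.e. the order `c^i` with (only) the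
comparison between `x_i` and `¬x_i` deleted.  (The orders of the voters `v_i^j` and
`u_j` are already total, so a completion is determined by the `Tv i`.) -/
def IsProfileCompletion {ℓ : ℕ} (oth : Fin ℓ → Fin (2 * ℓ - 1) → Cand ℓ)
    (d : ℕ) (Tv : Fin ℓ → Cand ℓ → ℕ) : Prop :=
  ∀ i, IsPosOrder ℓ (Tv i) ∧
    ∀ a b, viBasePos oth d i a < viBasePos oth d i b →
      ¬(a = some (i, true) ∧ b = some (i, false)) → Tv i a < Tv i b

/-- The score `s(T,c)` of candidate `c` in the completion given by `Tv`: the sum over all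
`n = ℓ(m−2)+(m−1)` voters (the `v_i`, the `v_i^j` for `j ∈ {1,…,m−3}`, and the `u_j` for
`j ∈ {1,…,m−1}`) of `r` applied to the position of `c`. -/
noncomputable def score {ℓ : ℕ} (r : ℕ → ℕ) (oth : Fin ℓ → Fin (2 * ℓ - 1) → Cand ℓ)
    (d : ℕ) (Tv : Fin ℓ → Cand ℓ → ℕ) (c : Cand ℓ) : ℕ :=
  (∑ i : Fin ℓ, r (Tv i c)) +
  (∑ i : Fin ℓ, ∑ j ∈ Finset.Icc 1 (2 * ℓ - 2), r (vijPos oth d i j c)) +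
  (∑ j ∈ Finset.Icc 1 (2 * ℓ), r (uPos ℓ j c))

/-- The completion `Tv` selects the literal `x_i` (if `b = true`) resp. `¬x_i`
(if `b = false`): the completion of voter `v_i` places it above its negation. -/
def Selects {ℓ : ℕ} (Tv : Fin ℓ → Cand ℓ → ℕ) (i : Fin ℓ) (b : Bool) : Prop :=
  if b then Tv i (some (i, true)) < Tv i (some (i, false))
  else Tv i (some (i, false)) < Tv i (some (i, true))

/-- `c` is a winner of the completion `Tv`: it has maximum score. -/
noncomputable def IsWinner {ℓ : ℕ} (r : ℕ → ℕ) (oth : Fin ℓ → Fin (2 * ℓ - 1) → Cand ℓ)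
    (d : ℕ) (Tv : Fin ℓ → Cand ℓ → ℕ) (c : Cand ℓ) : Prop :=
  ∀ c', score r oth d Tv c' ≤ score r oth d Tv c

/-- in the tautology-reduction profile, for every completion `T`, the score
of the special candidate `x₀` is `s(T,x₀) = ℓ·ρ + (m−1)·r(m)`, where
`ρ = (Σ_{i=1}^{m} r(i)) − r(d) − r(d+1)`. -/
/- ## Auxiliary lemmas -/


lemma mod_invol {k q0 a : ℕ} (hk : 0 < k) (ha : a < k) :
    (q0 + k - (q0 + k - a) % k) % k = a := by
  set b := (q0 + k - a) % k with hbdef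
  have hbk : b < k := Nat.mod_lt _ hk
  have h1 : b ≡ q0 + k - a [MOD k] := Nat.mod_modEq _ k
  have h2 : a + b ≡ (q0 + k - b) + b [MOD k] := by
    calc a + b ≡ a + (q0 + k - a) [MOD k] := Nat.ModEq.add_left a h1
      _ = q0 + k := by omega
      _ = (q0 + k - b) + b := by omega
  have h3 : a ≡ q0 + k - b [MOD k] := Nat.ModEq.add_right_cancel' b h2
  have h4 : (q0 + k - b) % k = a % k := h3.symm
  rw [h4, Nat.mod_eq_of_lt ha]

lemma cyc_sum (g : ℕ → ℕ) (k q0 : ℕ) (hk : 0 < k) (hq : q0 < k) :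
    g q0 + ∑ j ∈ Finset.Icc 1 (k-1), g ((q0 + k - j) % k) = ∑ t ∈ Finset.range k, g t := by
  have h0 : (Finset.range k) = insert 0 (Finset.Icc 1 (k-1)) := by
    ext x; simp [Finset.mem_Icc]; omega
  have hrw : ∑ j ∈ Finset.range k, g ((q0 + k - j) % k) = ∑ t ∈ Finset.range k, g t := by
    apply Finset.sum_nbij' (i := fun j => (q0 + k - j) % k) (j := fun t => (q0 + k - t) % k)
    · intro a _; exact Finset.mem_range.2 (Nat.mod_lt _ hk)
    · intro a _; exact Finset.mem_range.2 (Nat.mod_lt _ hk)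
    · intro a ha; exact mod_invol hk (Finset.mem_range.1 ha)
    · intro a ha; exact mod_invol hk (Finset.mem_range.1 ha)
    · intro a _; rfl
  rw [← hrw, h0, Finset.sum_insert (by simp)]
  congr 1
  rw [Nat.sub_zero, Nat.add_mod_right, Nat.mod_eq_of_lt hq]

lemma pos_eq_card {α : Type*} [Fintype α] [DecidableEq α] (m : ℕ)
    (hcard : Fintype.card α = m) (f : α → ℕ) (hinj : Function.Injective f)
    (hb : ∀ c, 1 ≤ f c ∧ f c ≤ m) (c : α) :
    f c = (Finset.univ.filter (fun c' => f c' ≤ f c)).card := by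
  have himg : Finset.univ.image f = Finset.Icc 1 m := by
    apply Finset.eq_of_subset_of_card_le
    · intro x hx
      simp only [Finset.mem_image, Finset.mem_univ, true_and] at hx
      obtain ⟨c', rfl⟩ := hx
      exact Finset.mem_Icc.2 (hb c')
    · rw [Finset.card_image_of_injective _ hinj, Finset.card_univ, hcard, Nat.card_Icc]
      omega
  have h2 : Finset.image f (Finset.univ.filter (fun c' => f c' ≤ f c)) =
      Finset.Icc 1 (f c) := by
    ext x
    simp only [Finset.mem_image, Finset.mem_filter, Finset.mem_univ, true_and, Finset.mem_Icc]
    constructor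
    · rintro ⟨c', hle, rfl⟩; exact ⟨(hb c').1, hle⟩
    · rintro ⟨hx1, hx2⟩
      have hx : x ∈ Finset.univ.image f := by
        rw [himg]; exact Finset.mem_Icc.2 ⟨hx1, hx2.trans (hb c).2⟩
      simp only [Finset.mem_image, Finset.mem_univ, true_and] at hx
      obtain ⟨c', rfl⟩ := hx
      exact ⟨c', hx2, rfl⟩
  have h3 := Finset.card_image_of_injective
    (Finset.univ.filter (fun c' => f c' ≤ f c)) hinj
  rw [h2, Nat.card_Icc] at h3
  omega

lemma posO_sum (r : ℕ → ℕ) (ℓ d : ℕ) (hℓ : 1 ≤ ℓ) (hd1 : 1 ≤ d) (hd2 : d ≤ 2*ℓ) :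
    (∑ t ∈ Finset.range (2*ℓ-1), r (if t+1 < d then t+1 else t+3)) + (r d + r (d+1))
      = ∑ s ∈ Finset.Icc 1 (2*ℓ+1), r s := by
  have hIcc : Finset.Icc 1 (2*ℓ+1) = Finset.Ico 1 (2*ℓ+2) := by
    rw [← Finset.Ico_add_one_right_eq_Icc]; rfl
  rw [hIcc]
  have hsplitL : ∑ t ∈ Finset.range (2*ℓ-1), r (if t+1 < d then t+1 else t+3)
      = (∑ t ∈ Finset.Ico 0 (d-1), r (if t+1 < d then t+1 else t+3))
        + ∑ t ∈ Finset.Ico (d-1) (2*ℓ-1), r (if t+1 < d then t+1 else t+3) := by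
    rw [Finset.range_eq_Ico,
      ← Finset.sum_Ico_consecutive _ (Nat.zero_le (d-1)) (show d-1 ≤ 2*ℓ-1 by omega)]
  have hL1 : ∑ t ∈ Finset.Ico 0 (d-1), r (if t+1 < d then t+1 else t+3)
      = ∑ t ∈ Finset.Ico 1 d, r t := by
    rw [Finset.sum_Ico_eq_sum_range, Finset.sum_Ico_eq_sum_range]
    apply Finset.sum_congr (by congr 1 <;> omega)
    intro x hx
    simp only [Finset.mem_range] at hx
    rw [if_pos (by omega)]
    congr 1
    omega
  have hL2 : ∑ t ∈ Finset.Ico (d-1) (2*ℓ-1), r (if t+1 < d then t+1 else t+3)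
      = ∑ t ∈ Finset.Ico (d+2) (2*ℓ+2), r t := by
    rw [Finset.sum_Ico_eq_sum_range, Finset.sum_Ico_eq_sum_range]
    apply Finset.sum_congr (by congr 1 <;> omega)
    intro x hx
    simp only [Finset.mem_range] at hx
    rw [if_neg (by omega)]
    congr 1
    omega
  have hmid : r d + r (d+1) = ∑ t ∈ Finset.Ico d (d+2), r t := by
    have h22 : d + 2 = (d+1) + 1 := by omega
    rw [h22, Finset.sum_Ico_succ_top (by omega), Finset.sum_Ico_succ_top (by omega)]
    simp
  rw [hsplitL, hL1, hL2, hmid]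
  calc (∑ t ∈ Finset.Ico 1 d, r t + ∑ t ∈ Finset.Ico (d+2) (2*ℓ+2), r t)
        + ∑ t ∈ Finset.Ico d (d+2), r t
      = ∑ t ∈ Finset.Ico 1 d, r t +
        (∑ t ∈ Finset.Ico d (d+2), r t + ∑ t ∈ Finset.Ico (d+2) (2*ℓ+2), r t) := by ring
    _ = ∑ t ∈ Finset.Ico 1 d, r t + ∑ t ∈ Finset.Ico d (2*ℓ+2), r t := by
        rw [Finset.sum_Ico_consecutive _ (by omega : d ≤ d+2) (by omega : d+2 ≤ 2*ℓ+2)]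
    _ = ∑ s ∈ Finset.Ico 1 (2*ℓ+2), r s :=
        Finset.sum_Ico_consecutive _ (by omega) (by omega)

lemma card_cand (ℓ : ℕ) : Fintype.card (Cand ℓ) = 2 * ℓ + 1 := by
  simp [Cand]
  omega

lemma oth_exists {ℓ : ℕ} (oth : Fin ℓ → Fin (2 * ℓ - 1) → Cand ℓ) (hℓ : 1 ≤ ℓ)
    (hoth_inj : ∀ i, Function.Injective (oth i))
    (hoth_ne : ∀ i q, oth i q ≠ some (i, true) ∧ oth i q ≠ some (i, false))
    (i : Fin ℓ) (c : Cand ℓ) (h1 : c ≠ some (i,true)) (h2 : c ≠ some (i,false)) :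
    ∃ q, oth i q = c := by
  classical
  have hsub : (Finset.univ.image (oth i)) ⊆
      (Finset.univ \ {some (i,true), some (i,false)} : Finset (Cand ℓ)) := by
    intro x hx
    simp only [Finset.mem_image, Finset.mem_univ, true_and] at hx
    obtain ⟨q, rfl⟩ := hx
    simp only [Finset.mem_sdiff, Finset.mem_univ, true_and, Finset.mem_insert,
      Finset.mem_singleton]
    push_neg
    exact ⟨(hoth_ne i q).1, (hoth_ne i q).2⟩
  have hcards : (Finset.univ \ ({some (i,true), some (i,false)} : Finset (Cand ℓ))).card
      ≤ (Finset.univ.image (oth i)).card := by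
    rw [Finset.card_sdiff_of_subset (fun x _ => Finset.mem_univ x)]
    rw [Finset.card_image_of_injective _ (hoth_inj i), Finset.card_univ, Finset.card_univ,
      card_cand, Fintype.card_fin, Finset.card_pair (by simp)]
    omega
  have heq := Finset.eq_of_subset_of_card_le hsub hcards
  have hc : c ∈ Finset.univ.image (oth i) := by
    rw [heq]
    simp [h1, h2]
  simpa using hc

lemma othIdx_spec {ℓ : ℕ} (oth : Fin ℓ → Fin (2 * ℓ - 1) → Cand ℓ) (i : Fin ℓ) {c : Cand ℓ}
    (h : ∃ q, oth i q = c) :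
    ∃ q : Fin (2*ℓ-1), (q : ℕ) = othIdx oth i c ∧ oth i q = c :=
  ⟨h.choose, by rw [othIdx, dif_pos h], h.choose_spec⟩


theorem score_of_special_candidate (ℓ : ℕ) (hℓ : 1 ≤ ℓ) (r : ℕ → ℕ)
    (hr_mono : ∀ p q, 1 ≤ p → p ≤ q → q ≤ 2 * ℓ + 1 → r q ≤ r p)
    (hr_strict : r (2 * ℓ + 1) < r 1)
    (d : ℕ) (hd1 : 1 ≤ d) (hd2 : d ≤ 2 * ℓ) (hrd : r (d + 1) < r d)
    (oth : Fin ℓ → Fin (2 * ℓ - 1) → Cand ℓ)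
    (hoth_inj : ∀ i, Function.Injective (oth i))
    (hoth_ne : ∀ i q, oth i q ≠ some (i, true) ∧ oth i q ≠ some (i, false))
    (Tv : Fin ℓ → Cand ℓ → ℕ) (hTv : IsProfileCompletion oth d Tv) :
    score r oth d Tv none =
      ℓ * ((∑ s ∈ Finset.Icc 1 (2 * ℓ + 1), r s) - r d - r (d + 1)) +
      (2 * ℓ) * r (2 * ℓ + 1) := by
  classical
  have hcard := card_cand ℓ
  -- the u-voters all put x₀ last
  have hu : ∑ j ∈ Finset.Icc 1 (2*ℓ), r (uPos ℓ j (none : Cand ℓ)) = 2*ℓ * r (2*ℓ+1) := by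
    simp only [uPos]
    rw [Finset.sum_const, Nat.card_Icc, smul_eq_mul]
    congr 1
  -- per-i computation
  have hper : ∀ i : Fin ℓ,
      r (Tv i none) + ∑ j ∈ Finset.Icc 1 (2*ℓ-2), r (vijPos oth d i j none)
      = (∑ s ∈ Finset.Icc 1 (2*ℓ+1), r s) - r d - r (d+1) := by
    intro i
    -- basic facts about viBasePos
    have hPnp : ∀ c : Cand ℓ, c ≠ some (i,true) → c ≠ some (i,false) →
        viBasePos oth d i c =
          if othIdx oth i c + 1 < d then othIdx oth i c + 1 else othIdx oth i c + 3 := by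
      intro c h1 h2
      rw [viBasePos, if_neg h1, if_neg h2]
    have hPlit1 : viBasePos oth d i (some (i,true)) = d := by
      rw [viBasePos, if_pos rfl]
    have hPlit2 : viBasePos oth d i (some (i,false)) = d + 1 := by
      rw [viBasePos, if_neg (by simp), if_pos rfl]
    have hidxlt : ∀ c : Cand ℓ, c ≠ some (i,true) → c ≠ some (i,false) →
        othIdx oth i c < 2*ℓ-1 := by
      intro c h1 h2
      obtain ⟨q, hq, _⟩ := othIdx_spec oth i (oth_exists oth hℓ hoth_inj hoth_ne i c h1 h2)
      rw [← hq]; exact q.isLt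
    have hidxinj : ∀ c1 c2 : Cand ℓ, c1 ≠ some (i,true) → c1 ≠ some (i,false) →
        c2 ≠ some (i,true) → c2 ≠ some (i,false) →
        othIdx oth i c1 = othIdx oth i c2 → c1 = c2 := by
      intro c1 c2 h11 h12 h21 h22 heq
      obtain ⟨q1, hq1, hv1⟩ := othIdx_spec oth i (oth_exists oth hℓ hoth_inj hoth_ne i c1 h11 h12)
      obtain ⟨q2, hq2, hv2⟩ := othIdx_spec oth i (oth_exists oth hℓ hoth_inj hoth_ne i c2 h21 h22)
      have hq12 : q1 = q2 := Fin.ext (by omega)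
      rw [← hv1, ← hv2, hq12]
    have hPbd : ∀ c : Cand ℓ, 1 ≤ viBasePos oth d i c ∧ viBasePos oth d i c ≤ 2*ℓ+1 := by
      intro c
      by_cases h1 : c = some (i,true)
      · rw [h1, hPlit1]; omega
      by_cases h2 : c = some (i,false)
      · rw [h2, hPlit2]; omega
      have := hidxlt c h1 h2
      rw [hPnp c h1 h2]
      split <;> omega
    have hkey : ∀ c : Cand ℓ, c ≠ some (i,true) → c ≠ some (i,false) →
        viBasePos oth d i c ≠ d ∧ viBasePos oth d i c ≠ d + 1 := by
      intro c h1 h2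
      rw [hPnp c h1 h2]
      split <;> omega
    have hPinj : Function.Injective (viBasePos oth d i) := by
      intro a b hab
      by_cases ha1 : a = some (i,true)
      · subst ha1
        rw [hPlit1] at hab
        by_cases hb1 : b = some (i,true)
        · exact hb1.symm
        by_cases hb2 : b = some (i,false)
        · rw [hb2, hPlit2] at hab; omega
        · exact absurd hab.symm (hkey b hb1 hb2).1
      by_cases ha2 : a = some (i,false)
      · subst ha2
        rw [hPlit2] at hab
        by_cases hb1 : b = some (i,true)
        · rw [hb1, hPlit1] at hab; omega
        by_cases hb2 : b = some (i,false)
        · exact hb2.symm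
        · exact absurd hab.symm (hkey b hb1 hb2).2
      by_cases hb1 : b = some (i,true)
      · subst hb1; rw [hPlit1] at hab
        exact absurd hab (hkey a ha1 ha2).1
      by_cases hb2 : b = some (i,false)
      · subst hb2; rw [hPlit2] at hab
        exact absurd hab (hkey a ha1 ha2).2
      · have hla := hidxlt a ha1 ha2
        have hlb := hidxlt b hb1 hb2
        rw [hPnp a ha1 ha2, hPnp b hb1 hb2] at hab
        apply hidxinj a b ha1 ha2 hb1 hb2
        by_cases hca : othIdx oth i a + 1 < d <;> by_cases hcb : othIdx oth i b + 1 < d <;>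
          simp only [hca, hcb, if_true, if_false, if_pos, if_neg, not_false_iff] at hab <;>
          omega
    -- Tv i agrees with viBasePos at none
    obtain ⟨⟨hTinj, hTbd⟩, hTmono⟩ := hTv i
    have hTveq : Tv i (none : Cand ℓ) = viBasePos oth d i none := by
      have e1 := pos_eq_card (2*ℓ+1) hcard (Tv i) hTinj hTbd (none : Cand ℓ)
      have e2 := pos_eq_card (2*ℓ+1) hcard (viBasePos oth d i) hPinj hPbd (none : Cand ℓ)
      rw [e1, e2]
      congr 1
      apply Finset.filter_congr
      intro c _
      by_cases hc : c = none
      · subst hc; simp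
      · rcases lt_trichotomy (viBasePos oth d i c) (viBasePos oth d i none) with h|h|h
        · have hlt := hTmono c none h (by simp)
          constructor <;> intro _ <;> omega
        · exact absurd (hPinj h) hc
        · have hlt := hTmono none c h (by simp)
          constructor <;> intro hh <;> omega
    -- rewrite each vij position
    have hvij : ∀ j, r (vijPos oth d i j (none : Cand ℓ)) =
        (fun t => r (if t+1 < d then t+1 else t+3))
          ((othIdx oth i (none : Cand ℓ) + (2*ℓ-1) - j) % (2*ℓ-1)) := by
      intro j
      simp only [vijPos, reduceCtorEq, if_false]
    have hq0lt : othIdx oth i (none : Cand ℓ) < 2*ℓ-1 := hidxlt none (by simp) (by simp)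
    have hcyc := cyc_sum (fun t => r (if t+1 < d then t+1 else t+3)) (2*ℓ-1)
      (othIdx oth i (none : Cand ℓ)) (by omega) hq0lt
    rw [show 2*ℓ-1-1 = 2*ℓ-2 from by omega] at hcyc
    have hsum : r (Tv i (none : Cand ℓ))
        + ∑ j ∈ Finset.Icc 1 (2*ℓ-2), r (vijPos oth d i j none)
        = ∑ t ∈ Finset.range (2*ℓ-1), r (if t+1 < d then t+1 else t+3) := by
      rw [hTveq, hPnp none (by simp) (by simp),
        Finset.sum_congr rfl (fun j _ => hvij j)]
      exact hcyc
    have htot := posO_sum r ℓ d hℓ hd1 hd2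
    omega
  -- assemble
  rw [score, ← Finset.sum_add_distrib,
    Finset.sum_congr rfl (fun i _ => hper i), hu]
  rw [Finset.sum_const, Finset.card_univ, Fintype.card_fin, smul_eq_mul]
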